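/- Let k+1 < l and define α(k, l) = (c − M·C(k) − m·(C(n) − C(l)))/(C(l) − C(k)) where C(i) = Σ_{j≤i} p_j with all p_j > 0. If m < α(k, l) < M and α(k+1, l) ≥ m, then α(k+1, l) ≤ α(k, l) < M, so the three-block vector with parameters (k+1, l) is feasible in P (all ordering and bound constraints hold). -/

import Mathlib

theorem stmt17 {n : ℕ} (p : Fin n → ℝ) (hp : ∀ i, 0 < p i) (m M c : ℝ) (hmM : m < M)
    (P : Set (Fin n → ℝ))
    (hP : P = {z : Fin n → ℝ | (∑ i, p i * z i = c) ∧ (∀ i, m ≤ z i ∧ z i ≤ M) ∧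
      (∀ i j : Fin n, i ≤ j → z j ≤ z i)})
    (k l : ℕ) (hkl : k + 1 < l) (hln : l ≤ n)
    (α : ℕ → ℕ → ℝ)
    (hα : ∀ k' l' : ℕ, α k' l' =
      (c - M * ∑ i ∈ Finset.univ.filter (fun i : Fin n => i.val < k'), p i
        - m * ∑ i ∈ Finset.univ.filter (fun i : Fin n => l' ≤ i.val), p i)
      / ∑ i ∈ Finset.univ.filter (fun i : Fin n => k' ≤ i.val ∧ i.val < l'), p i)
    (h1 : m < α k l) (h2 : α k l < M) (h3 : m ≤ α (k + 1) l) :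
    α (k + 1) l ≤ α k l ∧ α k l < M ∧
      (fun i : Fin n => if i.val < k + 1 then M else if i.val < l then α (k + 1) l else m) ∈ P := by
  have hkn : k < n := by omega
  have hk1n : k + 1 < n := by omega
  set A := ∑ i ∈ Finset.univ.filter (fun i : Fin n => i.val < k), p i with hA
  set A' := ∑ i ∈ Finset.univ.filter (fun i : Fin n => i.val < k + 1), p i with hA'
  set L := ∑ i ∈ Finset.univ.filter (fun i : Fin n => l ≤ i.val), p i with hL
  set S := ∑ i ∈ Finset.univ.filter (fun i : Fin n => k ≤ i.val ∧ i.val < l), p i with hS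
  set S' := ∑ i ∈ Finset.univ.filter (fun i : Fin n => k + 1 ≤ i.val ∧ i.val < l), p i with hS'
  have hSpos : 0 < S := by
    refine Finset.sum_pos (fun i _ => hp i) ⟨⟨k, hkn⟩, ?_⟩
    simp; omega
  have hS'pos : 0 < S' := by
    refine Finset.sum_pos (fun i _ => hp i) ⟨⟨k + 1, hk1n⟩, ?_⟩
    simp; omega
  have hAA' : A' = A + p ⟨k, hkn⟩ := by
    have hset : Finset.univ.filter (fun i : Fin n => i.val < k + 1) =
        insert ⟨k, hkn⟩ (Finset.univ.filter (fun i : Fin n => i.val < k)) := by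
      ext i; simp [Fin.ext_iff]; omega
    rw [hA', hset, Finset.sum_insert (by simp)]
    ring
  have hSS' : S = p ⟨k, hkn⟩ + S' := by
    have hset : Finset.univ.filter (fun i : Fin n => k ≤ i.val ∧ i.val < l) =
        insert ⟨k, hkn⟩ (Finset.univ.filter (fun i : Fin n => k + 1 ≤ i.val ∧ i.val < l)) := by
      ext i; simp [Fin.ext_iff]; omega
    rw [hS, hset, Finset.sum_insert (by simp)]
  have hE1 : α k l * S = c - M * A - m * L := by
    rw [hα k l]; exact div_mul_cancel₀ _ hSpos.ne'
  have hE2 : α (k + 1) l * S' = c - M * A' - m * L := by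
    rw [hα (k + 1) l]; exact div_mul_cancel₀ _ hS'pos.ne'
  have hkey : (α (k + 1) l - α k l) * S' = (α k l - M) * p ⟨k, hkn⟩ := by
    have := hE1
    rw [hSS'] at this
    linear_combination hE2 - this - M * hAA'
  have hle : α (k + 1) l ≤ α k l := by
    nlinarith [hp ⟨k, hkn⟩, hkey, hS'pos]
  refine ⟨hle, h2, ?_⟩
  rw [hP]
  simp only [Set.mem_setOf_eq]
  have hα'M : α (k + 1) l ≤ M := le_of_lt (lt_of_le_of_lt hle h2)
  refine ⟨?_, ?_, ?_⟩
  · -- sum equals c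
    have hsplit : (Finset.univ : Finset (Fin n)) =
        (Finset.univ.filter (fun i : Fin n => i.val < k + 1)) ∪
        ((Finset.univ.filter (fun i : Fin n => k + 1 ≤ i.val ∧ i.val < l)) ∪
         (Finset.univ.filter (fun i : Fin n => l ≤ i.val))) := by
      ext i; simp; omega
    rw [hsplit, Finset.sum_union, Finset.sum_union]
    · have e1 : ∑ i ∈ Finset.univ.filter (fun i : Fin n => i.val < k + 1),
          p i * (if i.val < k + 1 then M else if i.val < l then α (k + 1) l else m) = M * A' := by
        rw [hA', Finset.mul_sum]
        refine Finset.sum_congr rfl fun i hi => ?_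
        simp only [Finset.mem_filter] at hi
        rw [if_pos hi.2]; ring
      have e2 : ∑ i ∈ Finset.univ.filter (fun i : Fin n => k + 1 ≤ i.val ∧ i.val < l),
          p i * (if i.val < k + 1 then M else if i.val < l then α (k + 1) l else m)
          = α (k + 1) l * S' := by
        rw [hS', Finset.mul_sum]
        refine Finset.sum_congr rfl fun i hi => ?_
        simp only [Finset.mem_filter] at hi
        rw [if_neg (by omega), if_pos hi.2.2]; ring
      have e3 : ∑ i ∈ Finset.univ.filter (fun i : Fin n => l ≤ i.val),
          p i * (if i.val < k + 1 then M else if i.val < l then α (k + 1) l else m) = m * L := by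
        rw [hL, Finset.mul_sum]
        refine Finset.sum_congr rfl fun i hi => ?_
        simp only [Finset.mem_filter] at hi
        rw [if_neg (by omega), if_neg (by omega)]; ring
      rw [e1, e2, e3]
      linarith [hE2]
    · rw [Finset.disjoint_left]; intro i hi hi'
      simp at hi hi'; omega
    · rw [Finset.disjoint_left]; intro i hi hi'
      simp at hi hi'
      rcases hi' with h | h <;> omega
  · intro i
    by_cases hik : i.val < k + 1
    · simp [hik]; exact le_of_lt hmM
    · by_cases hil : i.val < l
      · simp [hik, hil]; exact ⟨h3, hα'M⟩
      · simp [hik, hil]; exact le_of_lt hmM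
  · intro i j hij
    have hij' : i.val ≤ j.val := hij
    by_cases hik : i.val < k + 1
    · simp only [if_pos hik]
      by_cases hjk : j.val < k + 1
      · simp [hjk]
      · by_cases hjl : j.val < l
        · simp [hjk, hjl]; exact hα'M
        · simp [hjk, hjl]; exact le_of_lt hmM
    · simp only [if_neg hik]
      have hjk : ¬ j.val < k + 1 := by omega
      by_cases hil : i.val < l
      · simp only [if_pos hil, if_neg hjk]
        by_cases hjl : j.val < l
        · simp [hjl]
        · simp [hjl]; exact h3
      · have hjl : ¬ j.val < l := by omega
        simp [hjk, hil, hjl]
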